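/- Define p : ℝ → ℝ by p(t) = 1 for t ≤ 0, p(t) = 1 + (t⁶/64)·(1 - 2(t-2) + (9/4)(t-2)² - (7/4)(t-2)³ + (7/8)(t-2)⁴) for 0 ≤ t ≤ 2, and p(t) = t for t ≥ 2. Then p is five times continuously differentiable on ℝ. -/

import Mathlib

noncomputable def gineSangClip (t : ℝ) : ℝ :=
  if t ≤ 0 then 1
  else if t ≤ 2 then
    1 + (t ^ 6 / 64) *
      (1 - 2 * (t - 2) + (9 / 4) * (t - 2) ^ 2 - (7 / 4) * (t - 2) ^ 3
        + (7 / 8) * (t - 2) ^ 4)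
  else t

open Set

/-- Piecewise combination with junctions at 0 and 2. -/
noncomputable def gsPc (f g h : ℝ → ℝ) (t : ℝ) : ℝ :=
  if t ≤ 0 then f t else if t ≤ 2 then g t else h t

lemma gsPc_continuous {f g h : ℝ → ℝ} (hf : Continuous f) (hg : Continuous g)
    (hh : Continuous h) (e0 : f 0 = g 0) (e2 : g 2 = h 2) :
    Continuous (gsPc f g h) := by
  have hin : Continuous fun t : ℝ => if t ≤ 2 then g t else h t := by
    apply Continuous.if_le hg hh continuous_id continuous_const
    intro x hx; subst hx; exact e2
  apply Continuous.if_le hf hin continuous_id continuous_const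
  intro x hx; subst hx; simp [e0]

lemma gsPc_hasDerivAt {f g h f' g' h' : ℝ → ℝ}
    (hf : ∀ t, HasDerivAt f (f' t) t) (hg : ∀ t, HasDerivAt g (g' t) t)
    (hh : ∀ t, HasDerivAt h (h' t) t)
    (e0 : f 0 = g 0) (e0' : f' 0 = g' 0) (e2 : g 2 = h 2) (e2' : g' 2 = h' 2) :
    ∀ t, HasDerivAt (gsPc f g h) (gsPc f' g' h' t) t := by
  intro t
  have hIcc : ∀ y ∈ Icc (0:ℝ) 2, gsPc f g h y = g y := by
    intro y hy
    rcases eq_or_lt_of_le hy.1 with h0 | h0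
    · simp [gsPc, ← h0, e0]
    · simp [gsPc, not_le.2 h0, hy.2]
  rcases lt_trichotomy t 0 with ht | ht | ht
  · have : gsPc f' g' h' t = f' t := by simp [gsPc, ht.le]
    rw [this]
    apply (hf t).congr_of_eventuallyEq
    filter_upwards [Iio_mem_nhds ht] with y hy
    simp [gsPc, hy.out.le]
  · subst ht
    have h1 : HasDerivWithinAt (gsPc f g h) (f' 0) (Iic 0) 0 :=
      ((hf 0).hasDerivWithinAt).congr (fun y hy => by simp [gsPc, hy.out])
        (by simp [gsPc])
    have h2 : HasDerivWithinAt (gsPc f g h) (f' 0) (Icc 0 2) 0 := by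
      rw [e0']
      exact ((hg 0).hasDerivWithinAt).congr hIcc (by simp [gsPc, e0])
    have h3 := h1.union h2
    have hset : Iic (0:ℝ) ∪ Icc 0 2 = Iic 2 := by
      ext x
      simp only [mem_union, mem_Iic, mem_Icc]
      constructor
      · rintro (hx | ⟨_, hx⟩) <;> linarith
      · intro hx
        rcases le_total x 0 with h0 | h0
        · exact Or.inl h0
        · exact Or.inr ⟨h0, hx⟩
    rw [hset] at h3
    have h4 := h3.hasDerivAt (Iic_mem_nhds (by norm_num))
    have h5 : gsPc f' g' h' 0 = f' 0 := by norm_num [gsPc]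
    rw [h5]; exact h4
  · rcases lt_trichotomy t 2 with ht2 | ht2 | ht2
    · have : gsPc f' g' h' t = g' t := by simp [gsPc, not_le.2 ht, ht2.le]
      rw [this]
      apply (hg t).congr_of_eventuallyEq
      filter_upwards [Ioo_mem_nhds ht ht2] with y hy
      simp [gsPc, not_le.2 hy.1, hy.2.le]
    · subst ht2
      have h1 : HasDerivWithinAt (gsPc f g h) (g' 2) (Icc 0 2) 2 :=
        ((hg 2).hasDerivWithinAt).congr hIcc (by simp [gsPc])
      have h2 : HasDerivWithinAt (gsPc f g h) (g' 2) (Ici 2) 2 := by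
        rw [e2']
        refine ((hh 2).hasDerivWithinAt).congr (fun y hy => ?_)
          (by simp [gsPc, ← e2])
        rcases eq_or_lt_of_le hy.out with h2y | h2y
        · simp [gsPc, ← h2y, ← e2]
        · simp [gsPc, not_le.2 h2y, not_le.2 (by linarith : (0:ℝ) < y)]
      have h3 := h1.union h2
      have hset : Icc (0:ℝ) 2 ∪ Ici 2 = Ici 0 := by
        ext x
        simp only [mem_union, mem_Icc, mem_Ici]
        constructor
        · rintro (⟨hx, _⟩ | hx) <;> linarith
        · intro hx
          rcases le_total x 2 with h2x | h2x
          · exact Or.inl ⟨hx, h2x⟩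
          · exact Or.inr h2x
      rw [hset] at h3
      have h4 := h3.hasDerivAt (Ici_mem_nhds (by norm_num))
      have h5 : gsPc f' g' h' 2 = g' 2 := by norm_num [gsPc]
      rw [h5]; exact h4
    · have : gsPc f' g' h' t = h' t := by
        simp [gsPc, not_le.2 ht2, not_le.2 (by linarith : (0:ℝ) < t)]
      rw [this]
      apply (hh t).congr_of_eventuallyEq
      filter_upwards [Ioi_mem_nhds ht2] with y hy
      have hy2 := hy.out
      simp [gsPc, not_le.2 hy2, not_le.2 (by linarith : (0:ℝ) < y)]

noncomputable def gsP0 (t : ℝ) : ℝ :=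
  1 + (21/32) * t^6 - (15/16) * t^7 + (135/256) * t^8 - (35/256) * t^9 + (7/512) * t^10
noncomputable def gsP1 (t : ℝ) : ℝ :=
  (63/16) * t^5 - (105/16) * t^6 + (135/32) * t^7 - (315/256) * t^8 + (35/256) * t^9
noncomputable def gsP2 (t : ℝ) : ℝ :=
  (315/16) * t^4 - (315/8) * t^5 + (945/32) * t^6 - (315/32) * t^7 + (315/256) * t^8
noncomputable def gsP3 (t : ℝ) : ℝ :=
  (315/4) * t^3 - (1575/8) * t^4 + (2835/16) * t^5 - (2205/32) * t^6 + (315/32) * t^7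
noncomputable def gsP4 (t : ℝ) : ℝ :=
  (945/4) * t^2 - (1575/2) * t^3 + (14175/16) * t^4 - (6615/16) * t^5 + (2205/32) * t^6
noncomputable def gsP5 (t : ℝ) : ℝ :=
  (945/2) * t - (4725/2) * t^2 + (14175/4) * t^3 - (33075/16) * t^4 + (6615/16) * t^5

lemma gsMono (c : ℝ) (n : ℕ) (t : ℝ) :
    HasDerivAt (fun t : ℝ => c * t ^ n) (c * (n * t ^ (n - 1))) t :=
  (hasDerivAt_pow n t).const_mul c

lemma gsP0_deriv : ∀ t, HasDerivAt gsP0 (gsP1 t) t := by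
  intro t
  have h := (((((hasDerivAt_const t (1:ℝ)).add (gsMono (21/32) 6 t)).sub
    (gsMono (15/16) 7 t)).add (gsMono (135/256) 8 t)).sub
    (gsMono (35/256) 9 t)).add (gsMono (7/512) 10 t)
  unfold gsP0 gsP1
  refine h.congr_deriv ?_
  push_cast
  ring

lemma gsP1_deriv : ∀ t, HasDerivAt gsP1 (gsP2 t) t := by
  intro t
  have h := ((((gsMono (63/16) 5 t).sub (gsMono (105/16) 6 t)).add
    (gsMono (135/32) 7 t)).sub (gsMono (315/256) 8 t)).add (gsMono (35/256) 9 t)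
  unfold gsP1 gsP2
  refine h.congr_deriv ?_
  push_cast
  ring

lemma gsP2_deriv : ∀ t, HasDerivAt gsP2 (gsP3 t) t := by
  intro t
  have h := ((((gsMono (315/16) 4 t).sub (gsMono (315/8) 5 t)).add
    (gsMono (945/32) 6 t)).sub (gsMono (315/32) 7 t)).add (gsMono (315/256) 8 t)
  unfold gsP2 gsP3
  refine h.congr_deriv ?_
  push_cast
  ring

lemma gsP3_deriv : ∀ t, HasDerivAt gsP3 (gsP4 t) t := by
  intro t
  have h := ((((gsMono (315/4) 3 t).sub (gsMono (1575/8) 4 t)).add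
    (gsMono (2835/16) 5 t)).sub (gsMono (2205/32) 6 t)).add (gsMono (315/32) 7 t)
  unfold gsP3 gsP4
  refine h.congr_deriv ?_
  push_cast
  ring

lemma gsP4_deriv : ∀ t, HasDerivAt gsP4 (gsP5 t) t := by
  intro t
  have h := ((((gsMono (945/4) 2 t).sub (gsMono (1575/2) 3 t)).add
    (gsMono (14175/16) 4 t)).sub (gsMono (6615/16) 5 t)).add (gsMono (2205/32) 6 t)
  unfold gsP4 gsP5
  refine h.congr_deriv ?_
  push_cast
  ring

noncomputable def gsF0 : ℝ → ℝ := gsPc (fun _ => 1) gsP0 (fun t => t)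
noncomputable def gsF1 : ℝ → ℝ := gsPc (fun _ => 0) gsP1 (fun _ => 1)
noncomputable def gsF2 : ℝ → ℝ := gsPc (fun _ => 0) gsP2 (fun _ => 0)
noncomputable def gsF3 : ℝ → ℝ := gsPc (fun _ => 0) gsP3 (fun _ => 0)
noncomputable def gsF4 : ℝ → ℝ := gsPc (fun _ => 0) gsP4 (fun _ => 0)
noncomputable def gsF5 : ℝ → ℝ := gsPc (fun _ => 0) gsP5 (fun _ => 0)

lemma gsF0_deriv : ∀ t, HasDerivAt gsF0 (gsF1 t) t :=
  gsPc_hasDerivAt (fun t => hasDerivAt_const t 1) gsP0_deriv (fun t => hasDerivAt_id t)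
    (by norm_num [gsP0]) (by norm_num [gsP1]) (by norm_num [gsP0]) (by norm_num [gsP1])

lemma gsF1_deriv : ∀ t, HasDerivAt gsF1 (gsF2 t) t :=
  gsPc_hasDerivAt (fun t => hasDerivAt_const t 0) gsP1_deriv (fun t => hasDerivAt_const t 1)
    (by norm_num [gsP1]) (by norm_num [gsP2]) (by norm_num [gsP1]) (by norm_num [gsP2])

lemma gsF2_deriv : ∀ t, HasDerivAt gsF2 (gsF3 t) t :=
  gsPc_hasDerivAt (fun t => hasDerivAt_const t 0) gsP2_deriv (fun t => hasDerivAt_const t 0)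
    (by norm_num [gsP2]) (by norm_num [gsP3]) (by norm_num [gsP2]) (by norm_num [gsP3])

lemma gsF3_deriv : ∀ t, HasDerivAt gsF3 (gsF4 t) t :=
  gsPc_hasDerivAt (fun t => hasDerivAt_const t 0) gsP3_deriv (fun t => hasDerivAt_const t 0)
    (by norm_num [gsP3]) (by norm_num [gsP4]) (by norm_num [gsP3]) (by norm_num [gsP4])

lemma gsF4_deriv : ∀ t, HasDerivAt gsF4 (gsF5 t) t :=
  gsPc_hasDerivAt (fun t => hasDerivAt_const t 0) gsP4_deriv (fun t => hasDerivAt_const t 0)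
    (by norm_num [gsP4]) (by norm_num [gsP5]) (by norm_num [gsP4]) (by norm_num [gsP5])

lemma gsP5_continuous : Continuous gsP5 := by unfold gsP5; fun_prop

lemma gsF5_continuous : Continuous gsF5 :=
  gsPc_continuous continuous_const gsP5_continuous continuous_const
    (by norm_num [gsP5]) (by norm_num [gsP5])

lemma gineSangClip_eq : gineSangClip = gsF0 := by
  funext t
  unfold gineSangClip gsF0 gsPc gsP0
  split_ifs <;> ring

lemma gsContDiff_step {F G : ℝ → ℝ} {n : ℕ} (hd : ∀ t, HasDerivAt F (G t) t)
    (hG : ContDiff ℝ n G) : ContDiff ℝ (n + 1 : ℕ) F := by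
  have hc : ((n + 1 : ℕ) : WithTop ℕ∞) = (n : WithTop ℕ∞) + 1 := by push_cast; rfl
  rw [hc, contDiff_succ_iff_deriv]
  refine ⟨fun t => (hd t).differentiableAt, by simp, ?_⟩
  have : deriv F = G := funext fun t => (hd t).deriv
  rw [this]
  exact hG

theorem gineSangClip_contDiff : ContDiff ℝ 5 gineSangClip := by
  rw [gineSangClip_eq]
  have h5 : ContDiff ℝ (0 : ℕ) gsF5 := contDiff_zero.2 gsF5_continuous
  have h4 : ContDiff ℝ (1 : ℕ) gsF4 := gsContDiff_step gsF4_deriv h5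
  have h3 : ContDiff ℝ (2 : ℕ) gsF3 := gsContDiff_step gsF3_deriv h4
  have h2 : ContDiff ℝ (3 : ℕ) gsF2 := gsContDiff_step gsF2_deriv h3
  have h1 : ContDiff ℝ (4 : ℕ) gsF1 := gsContDiff_step gsF1_deriv h2
  have h0 : ContDiff ℝ (5 : ℕ) gsF0 := gsContDiff_step gsF0_deriv h1
  exact_mod_cast h0
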